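/- Let A_1,...,A_n and B_1,...,B_n be positive definite n×n matrices that are increasing sequences in the Loewner order (A_1 ≤ A_2 ≤ ... ≤ A_n, B_1 ≤ ... ≤ B_n), and let ω_1,...,ω_n be nonnegative reals. Then for α ∈ [0,1]: (∑_i ω_i)(∑_j ω_j (A_j ∘ B_j)) ≥ (∑_i ω_i (A_i #_α B_i)) ∘ (∑_j ω_j (A_j #_{1-α} B_j)) in the Loewner order, where #_α is the weighted geometric mean. -/

import Mathlib

open Matrix ComplexOrder

/-- `f(A)` via the spectral theorem: apply `f : ℝ → ℝ` to the eigenvalues of a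
Hermitian matrix (and act as the identity on non-Hermitian input). -/
noncomputable def matFun {m : Type*} [Fintype m] [DecidableEq m]
    (f : ℝ → ℝ) (A : Matrix m m ℂ) : Matrix m m ℂ :=
  if hA : A.IsHermitian then
    (hA.eigenvectorUnitary : Matrix m m ℂ) *
      Matrix.diagonal (fun i => ((f (hA.eigenvalues i) : ℝ) : ℂ)) *
      star (hA.eigenvectorUnitary : Matrix m m ℂ)
  else A

/-- Real power `A ^ r` of a (Hermitian) matrix, via the spectral theorem. -/
noncomputable def mpow {m : Type*} [Fintype m] [DecidableEq m]
    (A : Matrix m m ℂ) (r : ℝ) : Matrix m m ℂ :=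
  matFun (fun x => x ^ r) A

/-- The power mean interpolational path `A m_{r,t} B`; for `r = 0` it is the
weighted geometric mean `A^{1/2} (A^{-1/2} B A^{-1/2})^t A^{1/2}`. -/
noncomputable def powerMean {m : Type*} [Fintype m] [DecidableEq m]
    (r t : ℝ) (A B : Matrix m m ℂ) : Matrix m m ℂ :=
  mpow A (1 / 2) *
    (if r = 0 then mpow (mpow A (-(1 / 2)) * B * mpow A (-(1 / 2))) t
      else mpow ((1 - t) • (1 : Matrix m m ℂ) +
        t • mpow (mpow A (-(1 / 2)) * B * mpow A (-(1 / 2))) r) (1 / r)) *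
    mpow A (1 / 2)

/-- The weighted geometric mean `A #_t B`. -/
noncomputable def geoMean {m : Type*} [Fintype m] [DecidableEq m]
    (t : ℝ) (A B : Matrix m m ℂ) : Matrix m m ℂ :=
  powerMean 0 t A B

set_option linter.unusedSectionVars false
set_option maxHeartbeats 1000000

section helpers

variable {m : Type*} [Fintype m] [DecidableEq m] {A B P : Matrix m m ℂ}


variable {m : Type*} [Fintype m] [DecidableEq m] {A B P : Matrix m m ℂ}

lemma smul_psd {M : Matrix m m ℂ} (hM : M.PosSemidef) {c : ℝ} (hc : 0 ≤ c) :
    (c • M).PosSemidef := by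
  refine Matrix.PosSemidef.of_dotProduct_mulVec_nonneg ?_ ?_
  · ext i j
    simp only [conjTranspose_apply, Matrix.smul_apply, star_smul, star_trivial]
    rw [← conjTranspose_apply, hM.1]
  · intro x
    rw [smul_mulVec, dotProduct_smul]
    exact smul_nonneg (by exact_mod_cast hc) (hM.dotProduct_mulVec_nonneg x)

lemma psd_sum {ι : Type*} (s : Finset ι) (f : ι → Matrix m m ℂ)
    (h : ∀ i ∈ s, (f i).PosSemidef) : (∑ i ∈ s, f i).PosSemidef := by
  classical
  induction s using Finset.induction_on with
  | empty => simpa using Matrix.PosSemidef.zero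
  | @insert a s hx ih =>
    rw [Finset.sum_insert hx]
    exact (h _ (Finset.mem_insert_self _ _)).add (ih fun i hi => h i (Finset.mem_insert_of_mem hi))

lemma vecMulVec_psd (v : m → ℂ) : (vecMulVec v (star v)).PosSemidef := by
  refine Matrix.PosSemidef.of_dotProduct_mulVec_nonneg ?_ ?_
  · ext i j
    simp [vecMulVec_apply, conjTranspose_apply, mul_comm]
  · intro x
    have h : star x ⬝ᵥ (vecMulVec v (star v)) *ᵥ x
        = star (star v ⬝ᵥ x) * (star v ⬝ᵥ x) := by
      simp only [dotProduct, mulVec, vecMulVec_apply, star_sum, star_mul', Pi.star_apply,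
        star_star, Finset.sum_mul, Finset.mul_sum]
      rw [Finset.sum_comm]
      congr 1; funext i; congr 1; funext j; ring
    rw [h]
    exact star_mul_self_nonneg _

lemma mulDiagSum (V : Matrix m m ℂ) (d : m → ℝ) :
    V * Matrix.diagonal (fun i => (d i : ℂ)) * star V
      = ∑ k, d k • vecMulVec (fun i => V i k) (star (fun j => V j k)) := by
  ext i j
  rw [Matrix.sum_apply]
  simp only [Matrix.mul_apply, Matrix.diagonal_apply, star_apply, star_eq_conjTranspose,
    conjTranspose_apply, Matrix.smul_apply, vecMulVec_apply, Pi.star_apply,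
    Finset.sum_mul, ite_mul, zero_mul, Finset.sum_ite_eq, Finset.mem_univ, if_true]
  congr 1; funext k
  simp [Complex.real_smul]; ring

lemma hadamard_vecMulVec (a b : m → ℂ) :
    (vecMulVec a (star a)).hadamard (vecMulVec b (star b))
      = vecMulVec (a * b) (star (a * b)) := by
  ext i j
  simp only [hadamard_apply, vecMulVec_apply, Pi.star_apply, Pi.mul_apply, star_mul']
  ring

lemma hadamard_sum_smul_sum {ι κ : Type*} [Fintype ι] [Fintype κ]
    (a : ι → ℝ) (b : κ → ℝ) (V : ι → Matrix m m ℂ) (W : κ → Matrix m m ℂ) :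
    (∑ k, a k • V k).hadamard (∑ l, b l • W l)
      = ∑ k, ∑ l, (a k * b l) • (V k).hadamard (W l) := by
  ext i j
  rw [Matrix.sum_apply]
  simp only [hadamard_apply, Matrix.sum_apply, Matrix.smul_apply, Finset.sum_mul,
    Finset.mul_sum]
  rw [Finset.sum_comm]
  congr 1; funext k
  congr 1; funext l
  simp [Complex.real_smul]; ring

lemma psdDoubleSum {ι κ : Type*} [Fintype ι] [Fintype κ]
    (F : ι → κ → ℝ) (hF : ∀ k l, 0 ≤ F k l) (g : ι → m → ℂ) (h : κ → m → ℂ) :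
    (∑ k, ∑ l, F k l • (vecMulVec (g k) (star (g k))).hadamard
      (vecMulVec (h l) (star (h l)))).PosSemidef := by
  refine psd_sum _ _ fun k _ => psd_sum _ _ fun l _ => ?_
  rw [hadamard_vecMulVec]
  exact smul_psd (vecMulVec_psd _) (hF k l)

lemma mpow_eq (hA : A.IsHermitian) (r : ℝ) :
    mpow A r = (hA.eigenvectorUnitary : Matrix m m ℂ) *
      Matrix.diagonal (fun i => ((hA.eigenvalues i ^ r : ℝ) : ℂ)) *
      star (hA.eigenvectorUnitary : Matrix m m ℂ) := by
  rw [mpow, matFun, dif_pos hA]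

lemma mpow_isHermitian (hA : A.IsHermitian) (r : ℝ) : (mpow A r).IsHermitian := by
  rw [mpow_eq hA r]
  have hd : (Matrix.diagonal (fun i => ((hA.eigenvalues i ^ r : ℝ) : ℂ))).IsHermitian :=
    isHermitian_diagonal_of_self_adjoint _ (funext fun i => by
      simp [Pi.star_apply, Complex.conj_ofReal])
  simpa [star_eq_conjTranspose] using
    isHermitian_mul_mul_conjTranspose (hA.eigenvectorUnitary : Matrix m m ℂ) hd

lemma mpow_mul_mpow (hA : A.PosDef) (r s : ℝ) :
    mpow A r * mpow A s = mpow A (r + s) := by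
  have hU : star (hA.1.eigenvectorUnitary : Matrix m m ℂ) *
      (hA.1.eigenvectorUnitary : Matrix m m ℂ) = 1 :=
    Matrix.mem_unitaryGroup_iff'.mp (hA.1.eigenvectorUnitary).2
  have key : ∀ X : Matrix m m ℂ,
      star (hA.1.eigenvectorUnitary : Matrix m m ℂ) *
        ((hA.1.eigenvectorUnitary : Matrix m m ℂ) * X) = X := fun X => by
    rw [← Matrix.mul_assoc, hU, Matrix.one_mul]
  rw [mpow_eq hA.1 r, mpow_eq hA.1 s, mpow_eq hA.1 (r + s)]
  simp only [Matrix.mul_assoc]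
  rw [key]
  rw [← Matrix.mul_assoc (Matrix.diagonal _) (Matrix.diagonal _),
    Matrix.diagonal_mul_diagonal]
  have hfun : (fun i => ((hA.1.eigenvalues i ^ r : ℝ) : ℂ) * ((hA.1.eigenvalues i ^ s : ℝ) : ℂ))
      = (fun i => ((hA.1.eigenvalues i ^ (r + s) : ℝ) : ℂ)) := by
    funext i
    rw [← Complex.ofReal_mul, ← Real.rpow_add (hA.eigenvalues_pos i)]
  rw [hfun]

lemma mpow_zero (hA : A.IsHermitian) : mpow A 0 = 1 := by
  rw [mpow_eq hA 0]
  simp only [Real.rpow_zero, Complex.ofReal_one]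
  rw [Matrix.diagonal_one, Matrix.mul_one]
  exact Matrix.mem_unitaryGroup_iff.mp (hA.eigenvectorUnitary).2

lemma mpow_one (hA : A.IsHermitian) : mpow A 1 = A := by
  rw [mpow_eq hA 1]
  simp only [Real.rpow_one]
  exact hA.spectral_theorem.symm

lemma geoMean_eq (A B : Matrix m m ℂ) (r : ℝ) :
    geoMean r A B = mpow A (1 / 2) *
      mpow (mpow A (-(1 / 2)) * B * mpow A (-(1 / 2))) r * mpow A (1 / 2) := by
  rw [geoMean, powerMean, if_pos rfl]

lemma inner_posSemidef (hA : A.PosDef) (hB : B.PosDef) :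
    (mpow A (-(1 / 2)) * B * mpow A (-(1 / 2))).PosSemidef := by
  have h := hB.posSemidef.conjTranspose_mul_mul_same (mpow A (-(1 / 2)))
  rwa [(mpow_isHermitian hA.1 (-(1 / 2))).eq] at h

lemma mul_vecMulVec_mul (hP : P.IsHermitian) (v : m → ℂ) :
    P * vecMulVec v (star v) * P = vecMulVec (P *ᵥ v) (star (P *ᵥ v)) := by
  rw [vecMulVec_eq (ι := Unit), vecMulVec_eq (ι := Unit), star_mulVec, hP.eq,
    replicateCol_mulVec, replicateRow_vecMul]
  simp only [Matrix.mul_assoc]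

lemma geoMean_rep (hA : A.PosDef) (hB : B.PosDef) :
    ∃ (t : m → ℝ) (g : m → m → ℂ), (∀ k, 0 ≤ t k) ∧
      (∀ r : ℝ, geoMean r A B = ∑ k, t k ^ r •
        vecMulVec (g k) (star (g k))) := by
  set T := mpow A (-(1 / 2)) * B * mpow A (-(1 / 2)) with hTdef
  have hT : T.PosSemidef := inner_posSemidef hA hB
  have hTH : T.IsHermitian := hT.1
  set P := mpow A (1 / 2) with hPdef
  have hPH : P.IsHermitian := mpow_isHermitian hA.1 _
  refine ⟨hTH.eigenvalues,
    fun k => P *ᵥ (fun i => (hTH.eigenvectorUnitary : Matrix m m ℂ) i k),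
    fun k => hT.eigenvalues_nonneg k, fun r => ?_⟩
  rw [geoMean_eq, ← hTdef, ← hPdef, mpow_eq hTH r, mulDiagSum]
  rw [Matrix.mul_sum, Matrix.sum_mul]
  congr 1; funext k
  rw [Matrix.mul_smul, Matrix.smul_mul, mul_vecMulVec_mul hPH]

lemma geoMean_zero (hA : A.PosDef) (hB : B.PosDef) : geoMean 0 A B = A := by
  rw [geoMean_eq, mpow_zero (inner_posSemidef hA hB).1, Matrix.mul_one,
    mpow_mul_mpow hA]
  norm_num
  exact mpow_one hA.1

lemma geoMean_one (hA : A.PosDef) (hB : B.PosDef) : geoMean 1 A B = B := by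
  rw [geoMean_eq, mpow_one (inner_posSemidef hA hB).1]
  rw [← Matrix.mul_assoc, ← Matrix.mul_assoc, mpow_mul_mpow hA]
  rw [Matrix.mul_assoc, Matrix.mul_assoc, mpow_mul_mpow hA]
  norm_num
  rw [mpow_zero hA.1, Matrix.one_mul, Matrix.mul_one]


lemma keyIneq (A B C D : Matrix m m ℂ) (hA : A.PosDef) (hB : B.PosDef) (hC : C.PosDef)
    (hD : D.PosDef) (α : ℝ) (h0 : 0 ≤ α) (h1 : α ≤ 1) :
    (α • (B.hadamard C) + (1 - α) • (A.hadamard D)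
      - (geoMean α A B).hadamard (geoMean (1 - α) C D)).PosSemidef := by
  obtain ⟨t, g, ht, hrep⟩ := geoMean_rep hA hB
  obtain ⟨s, h, hs, hrep'⟩ := geoMean_rep hC hD
  have hA' : A = ∑ k, t k ^ (0:ℝ) • vecMulVec (g k) (star (g k)) := by
    rw [← geoMean_zero hA hB]; exact hrep 0
  have hB' : B = ∑ k, t k ^ (1:ℝ) • vecMulVec (g k) (star (g k)) := by
    rw [← geoMean_one hA hB]; exact hrep 1
  have hC' : C = ∑ l, s l ^ (0:ℝ) • vecMulVec (h l) (star (h l)) := by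
    rw [← geoMean_zero hC hD]; exact hrep' 0
  have hD' : D = ∑ l, s l ^ (1:ℝ) • vecMulVec (h l) (star (h l)) := by
    rw [← geoMean_one hC hD]; exact hrep' 1
  have key2 : α • (B.hadamard C) + (1 - α) • (A.hadamard D)
      - (geoMean α A B).hadamard (geoMean (1 - α) C D)
      = ∑ k, ∑ l, (α * (t k ^ (1:ℝ) * s l ^ (0:ℝ)) + (1 - α) * (t k ^ (0:ℝ) * s l ^ (1:ℝ))
          - t k ^ α * s l ^ (1 - α)) •
          ((vecMulVec (g k) (star (g k))).hadamard (vecMulVec (h l) (star (h l)))) := by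
    rw [hrep α, hrep' (1 - α), hB', hC', hA', hD', hadamard_sum_smul_sum,
      hadamard_sum_smul_sum, hadamard_sum_smul_sum]
    simp only [Finset.smul_sum, smul_smul, ← Finset.sum_add_distrib, ← Finset.sum_sub_distrib]
    congr 1; funext k; congr 1; funext l
    rw [← add_smul, ← sub_smul]
  rw [key2]
  refine psdDoubleSum _ (fun k l => ?_) g h
  simp only [Real.rpow_zero, Real.rpow_one, mul_one, one_mul]
  have hgm := Real.geom_mean_le_arith_mean2_weighted (w₁ := α) (w₂ := 1 - α) (p₁ := t k) (p₂ := s l) h0 (by linarith) (ht k) (hs l) (by ring)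
  linarith

lemma psd_rep {M : Matrix m m ℂ} (hM : M.PosSemidef) :
    ∃ (t : m → ℝ) (g : m → m → ℂ), (∀ k, 0 ≤ t k) ∧
      M = ∑ k, t k • vecMulVec (g k) (star (g k)) := by
  refine ⟨hM.1.eigenvalues, fun k => (fun i => (hM.1.eigenvectorUnitary : Matrix m m ℂ) i k),
    hM.eigenvalues_nonneg, ?_⟩
  rw [← mulDiagSum (hM.1.eigenvectorUnitary : Matrix m m ℂ) hM.1.eigenvalues]
  exact hM.1.spectral_theorem

lemma hadamard_psd {M N : Matrix m m ℂ} (hM : M.PosSemidef) (hN : N.PosSemidef) :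
    (M.hadamard N).PosSemidef := by
  obtain ⟨t, g, ht, hMr⟩ := psd_rep hM
  obtain ⟨s, h, hs, hNr⟩ := psd_rep hN
  rw [hMr, hNr, hadamard_sum_smul_sum]
  exact psdDoubleSum _ (fun k l => mul_nonneg (ht k) (hs l)) g h

lemma pairIneq (A B C D : Matrix m m ℂ) (hA : A.PosDef) (hB : B.PosDef) (hC : C.PosDef)
    (hD : D.PosDef) (hCA : (C - A).PosSemidef) (hDB : (D - B).PosSemidef)
    (α : ℝ) (h0 : 0 ≤ α) (h1 : α ≤ 1) :
    (A.hadamard B + C.hadamard D - (geoMean α A B).hadamard (geoMean (1 - α) C D)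
      - (geoMean α C D).hadamard (geoMean (1 - α) A B)).PosSemidef := by
  have K1 := keyIneq A B C D hA hB hC hD α h0 h1
  have K2 := keyIneq C D A B hC hD hA hB α h0 h1
  have K3 := hadamard_psd hCA hDB
  have hEq : A.hadamard B + C.hadamard D - (geoMean α A B).hadamard (geoMean (1 - α) C D)
      - (geoMean α C D).hadamard (geoMean (1 - α) A B)
      = (α • (B.hadamard C) + (1 - α) • (A.hadamard D)
          - (geoMean α A B).hadamard (geoMean (1 - α) C D))
        + (α • (D.hadamard A) + (1 - α) • (C.hadamard B)
          - (geoMean α C D).hadamard (geoMean (1 - α) A B))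
        + (C - A).hadamard (D - B) := by
    have e1 : (C - A).hadamard (D - B)
        = C.hadamard D - C.hadamard B - A.hadamard D + A.hadamard B := by
      ext i j; simp only [hadamard_apply, Matrix.sub_apply, Matrix.add_apply]; ring
    rw [e1, hadamard_comm D A, hadamard_comm C B]
    module
  rw [hEq]
  exact (K1.add K2).add K3

end helpers

theorem chebyshev_hadamard_geoMean {n : ℕ} (A B : Fin n → Matrix (Fin n) (Fin n) ℂ)
    (hA : ∀ i, (A i).PosDef) (hB : ∀ i, (B i).PosDef)
    (hAmono : ∀ i j, i ≤ j → (A j - A i).PosSemidef)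
    (hBmono : ∀ i j, i ≤ j → (B j - B i).PosSemidef)
    (ω : Fin n → ℝ) (hω : ∀ i, 0 ≤ ω i) (α : ℝ) (hα : α ∈ Set.Icc (0 : ℝ) 1) :
    (((∑ i, ω i) • ∑ j, ω j • (A j).hadamard (B j)) -
      (∑ i, ω i • geoMean α (A i) (B i)).hadamard
        (∑ j, ω j • geoMean (1 - α) (A j) (B j))).PosSemidef := by
  set X : Fin n → Matrix (Fin n) (Fin n) ℂ := fun i => geoMean α (A i) (B i) with hX
  set Y : Fin n → Matrix (Fin n) (Fin n) ℂ := fun i => geoMean (1 - α) (A i) (B i) with hY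
  set M : Fin n → Matrix (Fin n) (Fin n) ℂ := fun i => (A i).hadamard (B i) with hM
  set E : Fin n → Fin n → Matrix (Fin n) (Fin n) ℂ := fun i j =>
    M i + M j - (X i).hadamard (Y j) - (X j).hadamard (Y i) with hE
  have hEpsd : ∀ i j, (E i j).PosSemidef := by
    intro i j
    rcases le_total i j with hij | hji
    · exact pairIneq (A i) (B i) (A j) (B j) (hA i) (hB i) (hA j) (hB j)
        (hAmono i j hij) (hBmono i j hij) α hα.1 hα.2
    · have h2 := pairIneq (A j) (B j) (A i) (B i) (hA j) (hB j) (hA i) (hB i)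
        (hAmono j i hji) (hBmono j i hji) α hα.1 hα.2
      have : E i j = M j + M i - (X j).hadamard (Y i) - (X i).hadamard (Y j) := by
        rw [hE]; module
      rw [this]
      exact h2
  have hS : (∑ i, ∑ j, (ω i * ω j) • E i j).PosSemidef :=
    psd_sum _ _ fun i _ => psd_sum _ _ fun j _ =>
      smul_psd (hEpsd i j) (mul_nonneg (hω i) (hω j))
  have h3 : ∑ i, ∑ j, (ω i * ω j) • (X i).hadamard (Y j)
      = (∑ i, ω i • X i).hadamard (∑ j, ω j • Y j) := (hadamard_sum_smul_sum ω ω X Y).symm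
  have h4 : ∑ i, ∑ j, (ω i * ω j) • (X j).hadamard (Y i)
      = (∑ i, ω i • X i).hadamard (∑ j, ω j • Y j) := by
    rw [Finset.sum_comm]
    simp_rw [mul_comm]
    exact (hadamard_sum_smul_sum ω ω X Y).symm
  have h1 : ∑ i : Fin n, ∑ j : Fin n, (ω i * ω j) • M i
      = (∑ i, ω i) • ∑ i, ω i • M i := by
    simp_rw [← Finset.sum_smul, ← Finset.mul_sum, Finset.smul_sum, smul_smul]
    congr 1; funext i
    rw [mul_comm]
  have h2 : ∑ i : Fin n, ∑ j : Fin n, (ω i * ω j) • M j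
      = (∑ i, ω i) • ∑ i, ω i • M i := by
    rw [Finset.sum_comm]
    simp_rw [mul_comm]
    exact h1
  have hGoal : ((∑ i, ω i) • ∑ j, ω j • M j)
      - (∑ i, ω i • X i).hadamard (∑ j, ω j • Y j)
      = (1 / 2 : ℝ) • ∑ i, ∑ j, (ω i * ω j) • E i j := by
    simp only [hE, smul_add, smul_sub, Finset.sum_add_distrib, Finset.sum_sub_distrib]
    rw [h1, h2, h3, h4]
    module
  rw [hGoal]
  exact smul_psd hS (by norm_num)
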